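/- Suppose k/e is odd. Then for every (a,b) ∈ GF(p^m)², the Hamming weight of the codeword c_{(a,b)} satisfies WT(c_{(a,b)}) = p^m − p^{m−1} − T(a,b)/(2p). -/

import Mathlib

/-- The fixed primitive `p`-th root of unity `ζ_p = exp(2πi/p)` raised to the power
`t ∈ GF(p)`, i.e. `ζ_p^t = exp(2πi·t/p)`. -/
noncomputable def zetaPow (p : ℕ) (t : ZMod p) : ℂ :=
  Complex.exp (2 * Real.pi * Complex.I * (t.val : ℂ) / p)

open Finset

private lemma sum_range_two_mul' (M : ℕ) (G : ℕ → ℂ) :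
    ∑ t ∈ range (2 * M), G t = ∑ u ∈ range M, (G (2*u) + G (2*u+1)) := by
  induction M with
  | zero => simp
  | succ M ih =>
      have h : 2 * (M+1) = (2*M + 1) + 1 := by ring
      rw [h, sum_range_succ, sum_range_succ, ih, sum_range_succ]
      ring

private lemma sum_range_shift_one (N : ℕ) (K : ℕ → ℂ) (hK : ∀ u, K (u + N) = K u) :
    ∑ u ∈ range N, K (u + 1) = ∑ u ∈ range N, K u := by
  have h := Finset.sum_range_succ' K N
  have h2 := Finset.sum_range_succ K N
  have h3 : K N = K 0 := by simpa using hK 0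
  linear_combination h2 - h + h3

private lemma sum_range_shift (N : ℕ) (H : ℕ → ℂ) (hH : ∀ u, H (u + N) = H u) (w : ℕ) :
    ∑ u ∈ range N, H (u + w) = ∑ u ∈ range N, H u := by
  induction w with
  | zero => simp
  | succ w ih =>
      have h1 : ∑ u ∈ range N, H (u + (w+1)) = ∑ u ∈ range N, (fun v => H (v + w)) (u + 1) := by
        refine sum_congr rfl fun u _ => ?_
        simp only []
        congr 1
        ring
      rw [h1, sum_range_shift_one N (fun v => H (v + w)) (fun u => by
        have : u + N + w = (u + w) + N := by ring
        rw [this, hH]), ih]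

private lemma zeta_pow_val (p : ℕ) (t : ZMod p) :
    zetaPow p t = Complex.exp (2 * Real.pi * Complex.I / p) ^ t.val := by
  rw [← Complex.exp_nat_mul]
  unfold zetaPow
  congr 1
  ring

private lemma zeta_pow_mod (p : ℕ) [NeZero p] (a : ℕ) :
    Complex.exp (2*Real.pi*Complex.I/p) ^ a = Complex.exp (2*Real.pi*Complex.I/p) ^ (a % p) := by
  conv_lhs => rw [← Nat.div_add_mod a p]
  rw [pow_add, pow_mul, (Complex.isPrimitiveRoot_exp p (NeZero.ne p)).pow_eq_one, one_pow, one_mul]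

private lemma char_sum (p : ℕ) [hp : Fact p.Prime] (w : ZMod p) :
    ∑ y : ZMod p, zetaPow p (y * w) = if w = 0 then (p : ℂ) else 0 := by
  have hζ := Complex.isPrimitiveRoot_exp p (NeZero.ne p)
  set ζ := Complex.exp (2*Real.pi*Complex.I/p) with hzeta
  have key : ∀ y : ZMod p, zetaPow p (y * w) = (ζ ^ w.val) ^ y.val := by
    intro y
    rw [zeta_pow_val, ZMod.val_mul, ← zeta_pow_mod, ← pow_mul, mul_comm w.val]
  rw [Finset.sum_congr rfl (fun y _ => key y)]
  have hbij : ∑ y : ZMod p, (ζ ^ w.val) ^ y.val = ∑ n ∈ Finset.range p, (ζ ^ w.val) ^ n := by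
    refine Finset.sum_nbij' (fun y => y.val) (fun n => (n : ZMod p)) ?_ ?_ ?_ ?_ ?_ <;> intros <;>
      simp_all [ZMod.val_lt, ZMod.natCast_zmod_val, ZMod.val_cast_of_lt, Finset.mem_range, Nat.mod_eq_of_lt]
  rw [hbij]
  by_cases hw : w = 0
  · simp [hw, ZMod.val_zero]
  · rw [if_neg hw]
    have hne : ζ ^ w.val ≠ 1 :=
      hζ.pow_ne_one_of_pos_of_lt (ZMod.val_pos.2 hw).ne' (ZMod.val_lt w)
    rw [geom_sum_eq hne]
    have : (ζ ^ w.val) ^ p = 1 := by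
      rw [← pow_mul, mul_comm, pow_mul, hζ.pow_eq_one, one_pow]
    rw [this]
    simp

private lemma pow_inj_aux {F : Type*} [Field F] {π : F} {N : ℕ} (hNpos : 0 < N)
    (hπ : orderOf π = N) : ∀ u ∈ range N, ∀ v ∈ range N, π ^ u = π ^ v → u = v := by
  have hπ0 : π ≠ 0 := by
    intro h
    have h1 : π ^ N = 1 := hπ ▸ pow_orderOf_eq_one π
    rw [h, zero_pow hNpos.ne'] at h1
    exact zero_ne_one h1
  have aux : ∀ u v : ℕ, u ≤ v → v < N → π ^ u = π ^ v → u = v := by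
    intro u v hle hv h
    have h2 : π ^ u * π ^ (v - u) = π ^ u * 1 := by
      rw [mul_one, ← pow_add, Nat.add_sub_cancel' hle, h]
    have h3 := mul_left_cancel₀ (pow_ne_zero u hπ0) h2
    have h4 : N ∣ v - u := hπ ▸ orderOf_dvd_of_pow_eq_one h3
    have h5 : v - u = 0 := Nat.eq_zero_of_dvd_of_lt h4 (by omega)
    omega
  intro u hu v hv h
  simp only [mem_range] at hu hv
  rcases le_total u v with hle | hle
  · exact aux u v hle hv h
  · exact (aux v u hle hu h.symm).symm

private lemma image_pow_eq {F : Type*} [Field F] [Fintype F] [DecidableEq F] {π : F} {N : ℕ}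
    (hNpos : 0 < N) (hπ : orderOf π = N) (hcard : Fintype.card F = N + 1) :
    (Finset.range N).image (π ^ ·) = Finset.univ \ {(0 : F)} := by
  have hπ0 : π ≠ 0 := by
    intro h
    have h1 : π ^ N = 1 := hπ ▸ pow_orderOf_eq_one π
    rw [h, zero_pow hNpos.ne'] at h1
    exact zero_ne_one h1
  apply Finset.eq_of_subset_of_card_le
  · intro x hx
    simp only [Finset.mem_image, Finset.mem_range] at hx
    obtain ⟨u, _, rfl⟩ := hx
    simp [pow_ne_zero u hπ0]
  · have h1 : (Finset.univ \ {(0:F)}).card = N := by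
      rw [Finset.card_sdiff_of_subset (by simp), Finset.card_singleton, Finset.card_univ, hcard]
      omega
    have h2 : ((Finset.range N).image (π ^ ·)).card = N := by
      rw [Finset.card_image_of_injOn, Finset.card_range]
      intro u hu v hv h
      exact pow_inj_aux hNpos hπ u (by simpa using hu) v (by simpa using hv) h
    omega

private lemma sum_units_eq {F : Type*} [Field F] [Fintype F] [DecidableEq F] {π : F} {N : ℕ}
    (hNpos : 0 < N) (hπ : orderOf π = N) (hcard : Fintype.card F = N + 1) (f : F → ℂ) :
    ∑ x : F, f x = f 0 + ∑ u ∈ Finset.range N, f (π ^ u) := by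
  rw [Finset.sum_eq_sum_sdiff_singleton_add (Finset.mem_univ (0 : F)) f,
    ← image_pow_eq hNpos hπ hcard, Finset.sum_image
      (fun u hu v hv h => pow_inj_aux hNpos hπ u hu v hv h)]
  ring

private lemma zetaPow_zero (p : ℕ) [NeZero p] : zetaPow p 0 = 1 := by
  rw [zeta_pow_val, ZMod.val_zero, pow_zero]

private lemma step5 (p k : ℕ) [Fact p.Prime] {F : Type*} [Field F] [Fintype F] [DecidableEq F]
    [Algebra (ZMod p) F]
    (π lam : F) (N d j : ℕ) (hNpos : 0 < N) (hNeven : Even N)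
    (hπ : orderOf π = N) (hcard : Fintype.card F = N + 1)
    (h2d : 2 * d = p ^ k + 1)
    (hjodd : Odd j) (hjlam : π ^ j = lam) (hlamd : lam ^ d = -lam)
    (A B : F) :
    ∑ x : F, (zetaPow p (Algebra.trace (ZMod p) F (A * x ^ 2 + B * x ^ (p ^ k + 1)))
      + zetaPow p (Algebra.trace (ZMod p) F (-(A * lam * x ^ 2) - B * lam * x ^ (p ^ k + 1))))
    = 2 + 2 * ∑ t ∈ range N, zetaPow p (Algebra.trace (ZMod p) F (A * (-π) ^ t + B * π ^ (t * d))) := by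
  have hπN : π ^ N = 1 := hπ ▸ pow_orderOf_eq_one π
  set G : ℕ → ℂ := fun t => zetaPow p (Algebra.trace (ZMod p) F (A * (-π) ^ t + B * π ^ (t * d)))
    with hG
  have hGper : ∀ t, G (t + N) = G t := by
    intro t
    have e1 : (-π) ^ (t + N) = (-π) ^ t := by
      rw [pow_add, Even.neg_pow hNeven, hπN, mul_one]
    have e2 : π ^ ((t + N) * d) = π ^ (t * d) := by
      have hNd : π ^ (N * d) = 1 := by rw [pow_mul, hπN, one_pow]
      rw [add_mul, pow_add, hNd, mul_one]
    simp only [hG, e1, e2]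
  have h2u : ∀ u : ℕ, π ^ (2 * u) = (π ^ u) ^ 2 := fun u => by
    rw [← pow_mul, mul_comm 2 u]
  have e1 : ∀ u : ℕ, (π ^ u) ^ (p ^ k + 1) = π ^ ((2 * u) * d) := by
    intro u
    rw [← pow_mul]
    congr 1
    have : 2 * u * d = u * (2 * d) := by ring
    rw [this, h2d]
  rw [Finset.sum_add_distrib]
  have T1 : (∑ x : F, zetaPow p (Algebra.trace (ZMod p) F (A * x ^ 2 + B * x ^ (p ^ k + 1))))
      = 1 + ∑ u ∈ range N, G (2 * u) := by
    rw [sum_units_eq hNpos hπ hcard]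
    congr 1
    · have hz : (0 : F) ^ (p ^ k + 1) = 0 := zero_pow (by positivity)
      rw [hz]
      simp [zetaPow_zero]
    · refine sum_congr rfl fun u _ => ?_
      simp only [hG]
      congr 2
      have e0 : (π ^ u) ^ 2 = (-π) ^ (2 * u) := by
        rw [Even.neg_pow (even_two_mul u), h2u]
      rw [e0, e1]
  have T2 : (∑ x : F, zetaPow p (Algebra.trace (ZMod p) F
        (-(A * lam * x ^ 2) - B * lam * x ^ (p ^ k + 1))))
      = 1 + ∑ u ∈ range N, G (2 * u + j) := by
    rw [sum_units_eq hNpos hπ hcard]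
    congr 1
    · have hz : (0 : F) ^ (p ^ k + 1) = 0 := zero_pow (by positivity)
      rw [hz]
      simp [zetaPow_zero]
    · refine sum_congr rfl fun u _ => ?_
      simp only [hG]
      congr 2
      have hodd2 : Odd (2 * u + j) := (even_two_mul u).add_odd hjodd
      have p1 : (-π) ^ (2 * u + j) = -((π ^ u) ^ 2 * lam) := by
        rw [Odd.neg_pow hodd2, pow_add, h2u, hjlam]
      have p2 : π ^ ((2 * u + j) * d) = -(lam * (π ^ u) ^ (p ^ k + 1)) := by
        have hjd : π ^ (j * d) = -lam := by rw [pow_mul, hjlam, hlamd]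
        rw [add_mul, pow_add, ← e1, hjd]
        ring
      rw [p1, p2]
      ring
  rw [T1, T2]
  have hshift : ∑ u ∈ range N, G (2 * u + j) = ∑ u ∈ range N, G (2 * u + 1) := by
    obtain ⟨w, hw⟩ := hjodd
    have hcong : ∀ u, G (2 * u + j) = (fun v => G (2 * v + 1)) (u + w) := by
      intro u
      simp only []
      congr 1
      omega
    rw [sum_congr rfl fun u _ => hcong u]
    exact sum_range_shift N (fun v => G (2 * v + 1)) (fun v => by
      have h1 : 2 * (v + N) + 1 = ((2 * v + 1) + N) + N := by ring
      rw [h1, hGper, hGper]) w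
  rw [hshift]
  have hdouble : (∑ u ∈ range N, G (2 * u)) + ∑ u ∈ range N, G (2 * u + 1)
      = 2 * ∑ t ∈ range N, G t := by
    rw [← sum_add_distrib, ← sum_range_two_mul']
    have h2N : 2 * N = N + N := by ring
    rw [h2N, Finset.sum_range_add]
    have : ∀ i, G (N + i) = G i := fun i => by rw [add_comm, hGper]
    rw [sum_congr rfl fun i _ => this i]
    ring
  linear_combination hdouble

private lemma geom_fact (p e n : ℕ) (hp : 0 < p) :
    (p ^ e - 1) * ∑ l ∈ range n, (p ^ e) ^ l = p ^ (e * n) - 1 := by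
  have h1 : (1:ℕ) ≤ p ^ e := Nat.one_le_pow _ _ hp
  have h2 : (1:ℕ) ≤ p ^ (e * n) := Nat.one_le_pow _ _ hp
  have hgeom := geom_sum_mul ((p:ℤ)^e) n
  have hcast : ((p ^ e - 1 : ℕ) : ℤ) * ((∑ l ∈ range n, (p ^ e) ^ l : ℕ) : ℤ)
      = ((p ^ (e * n) - 1 : ℕ) : ℤ) := by
    rw [Nat.cast_sub h1, Nat.cast_sub h2]
    push_cast
    rw [pow_mul]
    linear_combination hgeom
  exact_mod_cast hcast

private lemma odd_geom (c n : ℕ) (hc : Odd c) (hn : Odd n) :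
    Odd (∑ l ∈ range n, c ^ l) := by
  have hc2 : (c : ZMod 2) = 1 := by
    rw [← ZMod.natCast_mod, Nat.odd_iff.mp hc, Nat.cast_one]
  have h2 : ((∑ l ∈ range n, c ^ l : ℕ) : ZMod 2) = 1 := by
    push_cast
    rw [Finset.sum_congr rfl fun l _ => by rw [hc2, one_pow]]
    rw [Finset.sum_const, Finset.card_range, nsmul_eq_mul, mul_one,
      ← ZMod.natCast_mod, Nat.odd_iff.mp hn, Nat.cast_one]
  rcases Nat.even_or_odd (∑ l ∈ range n, c ^ l) with he | ho
  · exfalso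
    have h0 : ((∑ l ∈ range n, c ^ l : ℕ) : ZMod 2) = 0 :=
      (ZMod.natCast_eq_zero_iff _ 2).2 he.two_dvd
    rw [h2] at h0
    exact one_ne_zero h0
  · exact ho

/-- The exponential sum
`T(a,b) = Σ_{y ∈ GF(p)^*} Σ_{x ∈ GF(p^m)} ( ζ_p^{Tr(y·a·x² + y·b·x^{p^k+1})}
  + ζ_p^{Tr(-y·a·λ·x² - y·b·λ·x^{p^k+1})} )`,
where `Tr = Tr_{p^m/p}`. -/
noncomputable def Tab (p k : ℕ) [NeZero p] {F : Type*} [Field F] [Fintype F]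
    [Algebra (ZMod p) F] (lam a b : F) : ℂ :=
  ∑ y ∈ Finset.univ \ {(0 : ZMod p)}, ∑ x : F,
    (zetaPow p (Algebra.trace (ZMod p) F
        (algebraMap (ZMod p) F y * a * x ^ 2 + algebraMap (ZMod p) F y * b * x ^ (p ^ k + 1))) +
     zetaPow p (Algebra.trace (ZMod p) F
        (-(algebraMap (ZMod p) F y * a * lam * x ^ 2)
          - algebraMap (ZMod p) F y * b * lam * x ^ (p ^ k + 1))))

/-- The Hamming weight of the codeword
`c_{(a,b)} = ( Tr_{p^m/p}( a·(-π)^t + b·π^{t(p^k+1)/2} ) )_{t=0}^{p^m-2}`. -/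
noncomputable def wtC (p m k : ℕ) [NeZero p] {F : Type*} [Field F] [Fintype F]
    [Algebra (ZMod p) F] (π a b : F) : ℕ :=
  Nat.card {t : Fin (p ^ m - 1) //
    Algebra.trace (ZMod p) F
      (a * (-π) ^ (t : ℕ) + b * π ^ ((t : ℕ) * ((p ^ k + 1) / 2))) ≠ 0}

/-- Let `p` be an odd prime, `m, k` positive, `e = gcd(m,k)`, `s = m/e`
odd with `s ≥ 3`, `π` a primitive element of `F = GF(p^m)`, and `λ` a fixed nonsquare in
`GF(q) ⊆ F` (the subfield of solutions of `x^{p^e} = x`).  Suppose `k/e` is odd.  Then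
for every `(a,b) ∈ GF(p^m)²`,
`WT(c_{(a,b)}) = p^m - p^{m-1} - T(a,b)/(2p)`. -/
theorem stmt_15 (p m k e s : ℕ) [Fact p.Prime] (hodd : Odd p)
    (hm : 0 < m) (hk : 0 < k)
    (he : e = Nat.gcd m k) (hs : s = m / e) (hsodd : Odd s) (hs3 : 3 ≤ s)
    (hke : Odd (k / e))
    (F : Type*) [Field F] [Fintype F] [Algebra (ZMod p) F]
    (hF : Fintype.card F = p ^ m)
    (π : F) (hπ : orderOf π = p ^ m - 1)
    (lam : F) (hlam0 : lam ≠ 0) (hlamq : lam ^ (p ^ e) = lam)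
    (hlamns : ¬ ∃ x : F, x ^ (p ^ e) = x ∧ x ^ 2 = lam)
    (a b : F) :
    (wtC p m k π a b : ℂ)
      = (p : ℂ) ^ m - (p : ℂ) ^ (m - 1) - Tab p k lam a b / (2 * p) := by
  classical
  have hp : p.Prime := Fact.out
  have hp1 : 1 < p := hp.one_lt
  set N := p ^ m - 1 with hN
  set d := (p ^ k + 1) / 2 with hd
  have hpm1 : 1 ≤ p ^ m := Nat.one_le_pow _ _ hp.pos
  have hp3 : 3 ≤ p := by
    obtain ⟨w, hw⟩ := hodd
    omega
  have hpm3 : 3 ≤ p ^ m := by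
    calc 3 ≤ p := hp3
    _ = p ^ 1 := (pow_one p).symm
    _ ≤ p ^ m := Nat.pow_le_pow_right hp.pos hm
  have hpmodd : Odd (p ^ m) := hodd.pow
  have hNpos : 0 < N := by omega
  have hNeven : Even N := Nat.Odd.sub_odd hpmodd odd_one
  have hcard : Fintype.card F = N + 1 := by rw [hF]; omega
  have h2d : 2 * d = p ^ k + 1 := by
    have hpk : Odd (p ^ k) := hodd.pow
    obtain ⟨t, ht⟩ := hpk
    omega
  have hem : e ∣ m := he ▸ Nat.gcd_dvd_left m k
  have hek : e ∣ k := he ▸ Nat.gcd_dvd_right m k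
  have hes : e * s = m := by rw [hs]; exact Nat.mul_div_cancel' hem
  have her : e * (k / e) = k := Nat.mul_div_cancel' hek
  have hepos : 0 < e := by
    rw [he]
    exact Nat.gcd_pos_of_pos_left k hm
  set Q := p ^ e - 1 with hQ
  have hpe1 : 1 ≤ p ^ e := Nat.one_le_pow _ _ hp.pos
  have hpe3 : 3 ≤ p ^ e := by
    calc 3 ≤ p := hp3
    _ = p ^ 1 := (pow_one p).symm
    _ ≤ p ^ e := Nat.pow_le_pow_right hp.pos hepos
  have hQpos : 0 < Q := by omega
  set M := ∑ l ∈ Finset.range s, (p ^ e) ^ l with hM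
  set Mk := ∑ l ∈ Finset.range (k / e), (p ^ e) ^ l with hMk
  have hQM : Q * M = N := by
    rw [hQ, hM, hN, ← hes]
    exact geom_fact p e s hp.pos
  have hQMk : Q * Mk = p ^ k - 1 := by
    rw [hQ, hMk]
    conv_rhs => rw [← her]
    exact geom_fact p e (k / e) hp.pos
  have hModd : Odd M := odd_geom _ _ hodd.pow hsodd
  have hMkodd : Odd Mk := odd_geom _ _ hodd.pow hke
  have hQeven : Even Q := Nat.Odd.sub_odd hodd.pow odd_one
  have hπN : π ^ N = 1 := hπ ▸ pow_orderOf_eq_one π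
  have hπ0 : π ≠ 0 := by
    intro h
    rw [h, zero_pow hNpos.ne'] at hπN
    exact zero_ne_one hπN
  -- `π ^ (N/2) = -1`
  obtain ⟨c2, hc2⟩ := hNeven
  have hhalf : π ^ c2 = -1 := by
    have hx2 : π ^ c2 * π ^ c2 = 1 := by rw [← pow_add, ← hc2, hπN]
    have hx1 : π ^ c2 ≠ 1 := by
      intro h
      have hdvd : N ∣ c2 := hπ ▸ orderOf_dvd_of_pow_eq_one h
      have hc2pos : 0 < c2 := by omega
      have := Nat.le_of_dvd hc2pos hdvd
      omega
    have hfac : (π ^ c2 - 1) * (π ^ c2 + 1) = 0 := by linear_combination hx2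
    rcases mul_eq_zero.mp hfac with h | h
    · exact absurd (by linear_combination h) hx1
    · linear_combination h
  -- represent `lam` as a power of `π`
  have hmemlam : lam ∈ Finset.univ \ {(0:F)} := by simp [hlam0]
  rw [← image_pow_eq hNpos hπ hcard] at hmemlam
  obtain ⟨j, hjmem, hjlam⟩ := Finset.mem_image.mp hmemlam
  rw [Finset.mem_range] at hjmem
  have hpeQ : p ^ e = Q + 1 := by omega
  have hlamQ : lam ^ Q = 1 := by
    have h1 : lam ^ Q * lam = 1 * lam := by
      rw [one_mul, ← pow_succ, ← hpeQ, hlamq]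
    exact mul_right_cancel₀ hlam0 h1
  have hNdvd : N ∣ j * Q := by
    apply hπ ▸ orderOf_dvd_of_pow_eq_one
    rw [pow_mul, hjlam, hlamQ]
  obtain ⟨i, hji⟩ : M ∣ j := by
    have h1 : Q * M ∣ Q * j := by
      rw [hQM]
      rwa [mul_comm j Q] at hNdvd
    exact (mul_dvd_mul_iff_left hQpos.ne').mp h1
  obtain ⟨cQ, hcQ⟩ := hQeven
  have hchalf : c2 = cQ * M := by
    have h1 : (cQ + cQ) * M = c2 + c2 := by rw [← hcQ, hQM, hc2]
    have h2 : (cQ + cQ) * M = cQ * M + cQ * M := by ring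
    omega
  have hlamcQi : lam ^ cQ = (-1 : F) ^ i := by
    rw [← hjlam, ← pow_mul]
    have h3 : j * cQ = c2 * i := by rw [hji, hchalf]; ring
    rw [h3, pow_mul, hhalf]
  have hiodd : Odd i := by
    rcases Nat.even_or_odd i with hie | hio
    · exfalso
      obtain ⟨i', hi'⟩ := hie
      apply hlamns
      refine ⟨π ^ (M * i'), ?_, ?_⟩
      · rw [hpeQ, pow_succ]
        have hxQ : (π ^ (M * i')) ^ Q = 1 := by
          rw [← pow_mul]
          have h4 : M * i' * Q = N * i' := by rw [← hQM]; ring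
          rw [h4, pow_mul, hπN, one_pow]
        rw [hxQ, one_mul]
      · rw [← pow_mul, ← hjlam]
        congr 1
        rw [hji, hi']
        ring
    · exact hio
  have hlamcQ : lam ^ cQ = -1 := by rw [hlamcQi, hiodd.neg_one_pow]
  have hjodd : Odd j := hji ▸ hModd.mul hiodd
  have hlamd : lam ^ d = -lam := by
    have hpk1 : 1 ≤ p ^ k := Nat.one_le_pow _ _ hp.pos
    have hdk : d = cQ * Mk + 1 := by
      have h1 : Q * Mk = cQ * Mk + cQ * Mk := by rw [hcQ]; ring
      omega
    rw [hdk, pow_succ, pow_mul, hlamcQ, hMkodd.neg_one_pow, neg_one_mul]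
  -- counting
  set Tr := Algebra.trace (ZMod p) F with hTr
  set g : ℕ → ZMod p := fun t => Tr (a * (-π) ^ t + b * π ^ (t * d)) with hg
  set n0 : ℕ := (Finset.univ.filter fun t : Fin N => g t = 0).card with hn0
  have hwt : wtC p m k π a b = (Finset.univ.filter fun t : Fin N => ¬ (g t = 0)).card := by
    unfold wtC
    rw [Nat.card_eq_fintype_card, Fintype.card_subtype]
  have hn0wt : n0 + wtC p m k π a b = N := by
    rw [hwt, hn0, Finset.card_filter_add_card_filter_not, Finset.card_univ,
      Fintype.card_fin]
  set S : ZMod p → ℂ := fun y => ∑ t ∈ Finset.range N,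
    zetaPow p (Tr (algebraMap (ZMod p) F y * a * (-π) ^ t
      + algebraMap (ZMod p) F y * b * π ^ (t * d))) with hS
  have htr : ∀ (y : ZMod p) (c : F), y * Tr c = Tr (algebraMap (ZMod p) F y * c) := by
    intro y c
    rw [hTr, ← Algebra.smul_def, map_smul, smul_eq_mul]
  have master1 : ∑ t : Fin N, (∑ y : ZMod p, zetaPow p (y * g t)) = (p : ℂ) * n0 := by
    have h1 : ∀ t : Fin N, (∑ y : ZMod p, zetaPow p (y * g t))
        = (p : ℂ) * (if g (t : ℕ) = 0 then 1 else 0) := by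
      intro t
      rw [char_sum p (g t)]
      split <;> ring
    calc ∑ t : Fin N, (∑ y : ZMod p, zetaPow p (y * g t))
        = ∑ t : Fin N, ((p : ℂ) * (if g (t : ℕ) = 0 then 1 else 0)) :=
          Finset.sum_congr rfl fun t _ => h1 t
      _ = (p : ℂ) * ∑ t : Fin N, (if g (t : ℕ) = 0 then (1:ℂ) else 0) := by
          rw [Finset.mul_sum]
      _ = (p : ℂ) * n0 := by rw [Finset.sum_boole, hn0]
  have hSy : ∀ y : ZMod p, (∑ t : Fin N, zetaPow p (y * g t)) = S y := by
    intro y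
    show _ = ∑ t ∈ Finset.range N,
      zetaPow p (Tr (algebraMap (ZMod p) F y * a * (-π) ^ t
        + algebraMap (ZMod p) F y * b * π ^ (t * d)))
    rw [← Fin.sum_univ_eq_sum_range (fun t => zetaPow p
      (Tr (algebraMap (ZMod p) F y * a * (-π) ^ t
        + algebraMap (ZMod p) F y * b * π ^ (t * d)))) N]
    refine Finset.sum_congr rfl fun t _ => ?_
    congr 1
    rw [hg]
    show y * Tr (a * (-π) ^ (t:ℕ) + b * π ^ ((t:ℕ) * d)) = _
    rw [htr]
    congr 1
    ring
  have master2 : ∑ t : Fin N, (∑ y : ZMod p, zetaPow p (y * g t))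
      = (N : ℂ) + ∑ y ∈ Finset.univ \ {(0 : ZMod p)}, S y := by
    have hzero : ∑ t : Fin N, zetaPow p ((0 : ZMod p) * g t) = (N : ℂ) := by
      have h1 : ∀ t : Fin N, zetaPow p ((0 : ZMod p) * g t) = 1 := fun t => by
        rw [zero_mul, zetaPow_zero]
      calc ∑ t : Fin N, zetaPow p ((0 : ZMod p) * g t)
          = ∑ _t : Fin N, (1 : ℂ) := Finset.sum_congr rfl fun t _ => h1 t
        _ = (N : ℂ) := by simp
    calc ∑ t : Fin N, (∑ y : ZMod p, zetaPow p (y * g t))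
        = ∑ y : ZMod p, (∑ t : Fin N, zetaPow p (y * g t)) := Finset.sum_comm
      _ = (∑ y ∈ Finset.univ \ {(0 : ZMod p)}, ∑ t : Fin N, zetaPow p (y * g t))
            + ∑ t : Fin N, zetaPow p ((0 : ZMod p) * g t) :=
          Finset.sum_eq_sum_sdiff_singleton_add (Finset.mem_univ (0 : ZMod p)) _
      _ = (∑ y ∈ Finset.univ \ {(0 : ZMod p)}, S y) + (N : ℂ) := by
          rw [hzero, Finset.sum_congr rfl fun y _ => hSy y]
      _ = (N : ℂ) + ∑ y ∈ Finset.univ \ {(0 : ZMod p)}, S y := by ring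
  have tab : Tab p k lam a b = ∑ y ∈ Finset.univ \ {(0 : ZMod p)}, (2 + 2 * S y) := by
    unfold Tab
    refine Finset.sum_congr rfl fun y _ => ?_
    exact step5 p k π lam N d j hNpos ⟨c2, hc2⟩ hπ hcard h2d hjodd hjlam hlamd
      (algebraMap (ZMod p) F y * a) (algebraMap (ZMod p) F y * b)
  have hcardy : ((Finset.univ \ {(0 : ZMod p)}).card : ℂ) = (p : ℂ) - 1 := by
    rw [Finset.card_sdiff_of_subset (by simp), Finset.card_singleton, Finset.card_univ, ZMod.card]
    have : 1 ≤ p := hp.one_le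
    push_cast [Nat.cast_sub this]
    ring
  have tab2 : Tab p k lam a b
      = 2 * ((p : ℂ) - 1) + 2 * ∑ y ∈ Finset.univ \ {(0 : ZMod p)}, S y := by
    rw [tab, Finset.sum_add_distrib, Finset.sum_const, ← Finset.mul_sum, nsmul_eq_mul,
      hcardy]
    ring
  -- final algebra
  have key : (p : ℂ) * n0 = (N : ℂ) + ∑ y ∈ Finset.univ \ {(0 : ZMod p)}, S y := by
    rw [← master1, master2]
  have hNc : ((N : ℕ) : ℂ) = (p : ℂ) ^ m - 1 := by
    rw [hN]
    push_cast [Nat.cast_sub hpm1]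
    ring
  have hn0c : (n0 : ℂ) + (wtC p m k π a b : ℂ) = (N : ℂ) := by
    exact_mod_cast congrArg (Nat.cast : ℕ → ℂ) hn0wt
  have hpmc : (p : ℂ) ^ m = (p : ℂ) * (p : ℂ) ^ (m - 1) := by
    conv_lhs => rw [show m = (m - 1) + 1 by omega]
    rw [pow_succ]
    ring
  have hp0 : (p : ℂ) ≠ 0 := Nat.cast_ne_zero.2 hp.pos.ne'
  rw [hNc] at key hn0c
  field_simp
  linear_combination (-2 : ℂ) * key + 2 * (p : ℂ) * hn0c + tab2 - 2 * hpmc
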